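/- Let R be an integral domain and f ∈ R nonzero non-invertible. The image of u is a prime element of S = R[u,v]/(uv - f) if and only if f is a prime element of R. -/

import Mathlib

open MvPolynomial

/-- The suspension ring `S = R[u,v]/(uv - f)`. -/
abbrev Susp (R : Type*) [CommRing R] (f : R) : Type _ :=
  MvPolynomial (Fin 2) R ⧸
    Ideal.span {(X 0 * X 1 - C f : MvPolynomial (Fin 2) R)}

/-- The image of the variable `u` in `S`. -/
noncomputable abbrev suspU (R : Type*) [CommRing R] (f : R) : Susp R f :=
  Ideal.Quotient.mk _ (X 0)

/-- The image of the variable `v` in `S`. -/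
noncomputable abbrev suspV (R : Type*) [CommRing R] (f : R) : Susp R f :=
  Ideal.Quotient.mk _ (X 1)

section Aux

variable {R : Type*} [CommRing R] (f : R)

/-- Embedding of `R[X]` into `R[X0,X1]` sending `X` to `X 1`. -/
noncomputable def suspT : Polynomial R →+* MvPolynomial (Fin 2) R :=
  Polynomial.eval₂RingHom MvPolynomial.C (X 1)

/-- The map `R[X0,X1] → (R/(f))[X]` killing `X0` and `f`. -/
noncomputable def suspPhi : MvPolynomial (Fin 2) R →+* Polynomial (R ⧸ Ideal.span {f}) :=
  (eval₂Hom (Polynomial.C.comp (Ideal.Quotient.mk (Ideal.span {f})))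
    (fun i => if i = 0 then 0 else Polynomial.X) : _ →+* _)

lemma suspPhi_T (q : Polynomial R) :
    suspPhi f (suspT q) = q.map (Ideal.Quotient.mk (Ideal.span {f})) := by
  rw [suspT, Polynomial.coe_eval₂RingHom, Polynomial.hom_eval₂]
  have h1 : (suspPhi f).comp MvPolynomial.C
      = Polynomial.C.comp (Ideal.Quotient.mk (Ideal.span {f})) := by
    ext r; simp [suspPhi]
  have h2 : suspPhi f (X 1) = Polynomial.X := by simp [suspPhi]
  rw [h1, h2]; rfl

lemma suspT_decomp (p : MvPolynomial (Fin 2) R) :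
    ∃ q : Polynomial R, p - suspT q ∈ Ideal.span {(X 0 : MvPolynomial (Fin 2) R)} := by
  induction p using MvPolynomial.induction_on with
  | C a =>
      exact ⟨Polynomial.C a, by simp [suspT, Ideal.zero_mem]⟩
  | add p₁ p₂ h₁ h₂ =>
      obtain ⟨q₁, hq₁⟩ := h₁; obtain ⟨q₂, hq₂⟩ := h₂
      refine ⟨q₁ + q₂, ?_⟩
      have : p₁ + p₂ - suspT (q₁ + q₂) = (p₁ - suspT q₁) + (p₂ - suspT q₂) := by
        rw [map_add]; ring
      rw [this]; exact Ideal.add_mem _ hq₁ hq₂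
  | mul_X p i h =>
      obtain ⟨q, hq⟩ := h
      obtain rfl | rfl : i = 0 ∨ i = 1 := by omega
      · refine ⟨0, ?_⟩
        simp only [map_zero, sub_zero]
        exact Ideal.mem_span_singleton.2 ⟨p, mul_comm p _⟩
      · refine ⟨q * Polynomial.X, ?_⟩
        have hT : suspT (q * Polynomial.X) = suspT q * X 1 := by
          rw [map_mul]
          congr 1
          simp [suspT]
        have : p * X 1 - suspT (q * Polynomial.X) = (p - suspT q) * X 1 := by
          rw [hT]; ring
        rw [this]
        exact Ideal.mul_mem_right _ _ hq

lemma suspPhi_surjective : Function.Surjective (suspPhi f) := by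
  intro y
  obtain ⟨q, rfl⟩ := Polynomial.map_surjective _ Ideal.Quotient.mk_surjective y
  exact ⟨suspT q, suspPhi_T f q⟩

lemma suspPhi_ker :
    RingHom.ker (suspPhi f)
      = Ideal.span {(X 0 : MvPolynomial (Fin 2) R), C f} := by
  apply le_antisymm
  · intro p hp
    obtain ⟨q, hq⟩ := suspT_decomp p
    have hXmem : (X 0 : MvPolynomial (Fin 2) R) ∈
        Ideal.span {(X 0 : MvPolynomial (Fin 2) R), C f} :=
      Ideal.subset_span (by simp)
    have hCfmem : (C f : MvPolynomial (Fin 2) R) ∈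
        Ideal.span {(X 0 : MvPolynomial (Fin 2) R), C f} :=
      Ideal.subset_span (by simp)
    have hspan : Ideal.span {(X 0 : MvPolynomial (Fin 2) R)} ≤
        Ideal.span {(X 0 : MvPolynomial (Fin 2) R), C f} :=
      Ideal.span_mono (by simp)
    -- `suspPhi (suspT q) = suspPhi p = 0`, since `suspPhi (X 0) = 0`.
    have hX0 : suspPhi f (X 0 : MvPolynomial (Fin 2) R) = 0 := by simp [suspPhi]
    have hker : Ideal.span {(X 0 : MvPolynomial (Fin 2) R)} ≤ RingHom.ker (suspPhi f) := by
      rw [Ideal.span_le]; intro x hx; simp only [Set.mem_singleton_iff] at hx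
      subst hx; exact hX0
    have hq0 : suspPhi f (suspT q) = 0 := by
      have := hker hq
      have h' : suspPhi f (p - suspT q) = 0 := this
      rw [map_sub, sub_eq_zero] at h'
      rw [← h', hp]
    rw [suspPhi_T] at hq0
    -- all coefficients of `q` lie in `span {f}`
    have hcoeff : ∀ n, q.coeff n ∈ Ideal.span {f} := by
      intro n
      have := congrArg (fun r => Polynomial.coeff r n) hq0
      simp only [Polynomial.coeff_map, Polynomial.coeff_zero] at this
      exact (Ideal.Quotient.eq_zero_iff_mem).1 this
    have hqmem : q ∈ Ideal.map (Polynomial.C : R →+* Polynomial R) (Ideal.span {f}) :=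
      Ideal.mem_map_C_iff.2 hcoeff
    have hTmem : suspT q ∈ Ideal.span {(X 0 : MvPolynomial (Fin 2) R), C f} := by
      have : suspT (R := R) q ∈ Ideal.map (suspT (R := R))
          (Ideal.map (Polynomial.C : R →+* Polynomial R) (Ideal.span {f})) :=
        Ideal.mem_map_of_mem _ hqmem
      rw [Ideal.map_map] at this
      have hcomp : (suspT (R := R)).comp (Polynomial.C : R →+* Polynomial R)
          = (MvPolynomial.C : R →+* MvPolynomial (Fin 2) R) := by
        ext r; simp [suspT]
      rw [hcomp, Ideal.map_span] at this
      simp only [Set.image_singleton] at this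
      exact (Ideal.span_mono (by simp) : Ideal.span {(C f : MvPolynomial (Fin 2) R)} ≤ _) this
    have : p = (p - suspT q) + suspT q := by ring
    rw [this]
    exact Ideal.add_mem _ (hspan hq) hTmem
  · rw [Ideal.span_le]
    intro x hx
    simp only [Set.mem_insert_iff, Set.mem_singleton_iff] at hx
    rcases hx with rfl | rfl
    · simp [RingHom.mem_ker, suspPhi]
    · rw [SetLike.mem_coe, RingHom.mem_ker]
      have hC : suspPhi f (C f) = Polynomial.C (Ideal.Quotient.mk (Ideal.span {f}) f) := by
        simp [suspPhi]
      rw [hC, Ideal.Quotient.eq_zero_iff_mem.2 (Ideal.mem_span_singleton_self f), map_zero]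

lemma suspU_ne_zero (hf : ¬ IsUnit f) : suspU R f ≠ 0 := by
  intro h
  rw [suspU, Ideal.Quotient.eq_zero_iff_mem, Ideal.mem_span_singleton] at h
  obtain ⟨g, hg⟩ := h
  -- evaluate at `X 0 ↦ X`, `X 1 ↦ 0` into `R[X]`
  let ε : MvPolynomial (Fin 2) R →+* Polynomial R :=
    (eval₂Hom Polynomial.C (fun i => if i = 0 then Polynomial.X else 0) : _ →+* _)
  have hε := congrArg ε hg
  have hεX0 : ε (X 0) = Polynomial.X := by simp [ε]
  have hεX1 : ε (X 1) = 0 := by simp [ε]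
  rw [map_mul, map_sub, map_mul, hεX0, hεX1] at hε
  simp only [mul_zero, zero_sub] at hε
  have hεC : ε (C f) = Polynomial.C f := by simp [ε]
  rw [hεC] at hε
  have h1 := congrArg (fun r => Polynomial.coeff r 1) hε
  simp only [Polynomial.coeff_X_one, neg_mul, Polynomial.coeff_neg,
    Polynomial.coeff_C_mul] at h1
  exact hf (IsUnit.of_mul_eq_one (a := f) (-(ε g).coeff 1) (by linear_combination -h1))

end Aux

/-- The image of `u` is a prime element of `S = R[u,v]/(uv - f)` if and only if
`f` is a prime element of `R`. -/
theorem suspU_prime_iff (R : Type*) [CommRing R] [IsDomain R] (f : R)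
    (hf0 : f ≠ 0) (hf : ¬ IsUnit f) :
    Prime (suspU R f) ↔ Prime f := by
  classical
  set P := MvPolynomial (Fin 2) R
  set I : Ideal P := Ideal.span {(X 0 * X 1 - C f : P)}
  set J : Ideal P := Ideal.span {(X 0 : P), C f}
  have hIJ : I ≤ J := by
    rw [Ideal.span_le]
    intro x hx; simp only [Set.mem_singleton_iff] at hx; subst hx
    have hX : (X 0 : P) ∈ J := Ideal.subset_span (by simp)
    have hC : (C f : P) ∈ J := Ideal.subset_span (by simp)
    have : (X 0 * X 1 : P) - C f = X 1 * X 0 - C f := by ring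
    rw [this]
    exact Ideal.sub_mem _ (Ideal.mul_mem_left _ _ hX) hC
  have hker : RingHom.ker (Ideal.Quotient.mk I) = I := Ideal.mk_ker
  -- span of u equals the image of J
  have hmap : Ideal.span {suspU R f} = Ideal.map (Ideal.Quotient.mk I) J := by
    rw [Ideal.map_span]
    apply le_antisymm
    · exact Ideal.span_mono (by simp [Set.image_insert_eq]; left; rfl)
    · rw [Ideal.span_le]
      rintro x hx
      simp only [Set.image_insert_eq, Set.image_singleton, Set.mem_insert_iff,
        Set.mem_singleton_iff] at hx
      rcases hx with rfl | rfl
      · exact Ideal.subset_span rfl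
      · -- mk (C f) = mk (X 0) * mk (X 1)
        have hsub : (X 0 * X 1 : P) - C f ∈ I := Ideal.subset_span rfl
        have : Ideal.Quotient.mk I (C f) = Ideal.Quotient.mk I (X 0) * Ideal.Quotient.mk I (X 1) := by
          rw [← map_mul]
          exact (Ideal.Quotient.mk_eq_mk_iff_sub_mem _ _).2
            (by simpa using (I.neg_mem hsub))
        rw [this]
        exact Ideal.mul_mem_right _ _ (Ideal.subset_span rfl)
  -- J is prime iff f is prime
  have hJprime : J.IsPrime ↔ Prime f := by
    have hJ : J = RingHom.ker (suspPhi f) := (suspPhi_ker f).symm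
    have hnt : Ideal.span {f} ≠ (⊤ : Ideal R) := by
      simpa [Ideal.span_singleton_eq_top] using hf
    haveI : Nontrivial (R ⧸ Ideal.span {f}) := Ideal.Quotient.nontrivial_iff.mpr hnt
    rw [← Ideal.span_singleton_prime hf0, ← Ideal.Quotient.isDomain_iff_prime,
      hJ, ← Ideal.Quotient.isDomain_iff_prime]
    have e : (P ⧸ RingHom.ker (suspPhi f)) ≃+* Polynomial (R ⧸ Ideal.span {f}) :=
      RingHom.quotientKerEquivOfSurjective (suspPhi_surjective f)
    constructor
    · intro h
      haveI : IsDomain (Polynomial (R ⧸ Ideal.span {f})) :=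
        Function.Injective.isDomain e.symm e.symm.injective
      exact Function.Injective.isDomain (Polynomial.C : _ →+* Polynomial (R ⧸ Ideal.span {f}))
        Polynomial.C_injective
    · intro h
      haveI : IsDomain (Polynomial (R ⧸ Ideal.span {f})) := inferInstance
      exact Function.Injective.isDomain e e.injective
  rw [← Ideal.span_singleton_prime (suspU_ne_zero f hf), hmap]
  rw [← hJprime]
  constructor
  · intro h
    have hc : (Ideal.comap (Ideal.Quotient.mk I) (Ideal.map (Ideal.Quotient.mk I) J)).IsPrime :=
      Ideal.IsPrime.comap _
    rwa [Ideal.comap_map_of_surjective _ Ideal.Quotient.mk_surjective,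
      ← RingHom.ker_eq_comap_bot, hker, sup_eq_left.mpr hIJ] at hc
  · intro h
    exact Ideal.map_isPrime_of_surjective Ideal.Quotient.mk_surjective (hker.le.trans hIJ)
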